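/- Recursive structure of fixed points of γ: let w = u·a·v·b·Sym(u)·b be an element of F_n, where u·a is the principal prefix of w, and suppose v ≠ λ. Then v is symmetric, i.e., Sym(v) = v, and the word v̄·b (the complement of v, which equals the mirror of v since v is symmetric, followed by b) belongs to F_γ. -/

import Mathlib

/-- The two-letter alphabet {a, b}. -/
inductive Letter : Type
  | a : Letter
  | b : Letter
deriving DecidableEq, BEq, Repr

/-- Words over the alphabet {a, b}. -/
abbrev Word := List Letter

/-- δ(w) = |w|_a − |w|_b. -/
def delta (w : Word) : ℤ := (w.count Letter.a : ℤ) - (w.count Letter.b : ℤ)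

/-- A Dyck word: δ(w) = 0 and δ(p) ≥ 0 for every prefix p of w. -/
def IsDyck (w : Word) : Prop := delta w = 0 ∧ ∀ p : Word, p <+: w → 0 ≤ delta p

/-- Membership in D_n: w = d·b with d a Dyck word of length 2n. -/
def InD (n : ℕ) (w : Word) : Prop :=
  ∃ d : Word, IsDyck d ∧ d.length = 2 * n ∧ w = d ++ [Letter.b]

/-- Exchanging the letters a and b. -/
def Letter.flip : Letter → Letter
  | .a => .b
  | .b => .a

/-- The complement w̄ of a word w. -/
def comp (w : Word) : Word := w.map Letter.flip

/-- Sym(w): the complement of the mirror (reversal) of w. -/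
def sym (w : Word) : Word := comp w.reverse

/-- A palindrome: a word equal to its mirror. -/
def Palindrome (w : Word) : Prop := w.reverse = w

/-- w' is a conjugate of w: w = u·v and w' = v·u. -/
def Conj (w w' : Word) : Prop := ∃ u v : Word, w = u ++ v ∧ w' = v ++ u

/-- u is the principal prefix of w: the shortest prefix of w with δ(u) maximal. -/
def IsPrincipalPrefix (u w : Word) : Prop :=
  u <+: w ∧ (∀ p : Word, p <+: w → delta p ≤ delta u) ∧
    (∀ p : Word, p <+: w → delta p = delta u → u.length ≤ p.length)

/-- The graph of the map γ: writing w = u·v·b with u the principal prefix of w,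
    γ(w) = v̄·b·ū. -/
def GammaRel (w w' : Word) : Prop :=
  ∃ u v : Word, IsPrincipalPrefix u w ∧ w = u ++ v ++ [Letter.b] ∧
    w' = comp v ++ [Letter.b] ++ comp u

/-- F_n: the fixed points of γ in D_n. -/
def InF (n : ℕ) (w : Word) : Prop := InD n w ∧ GammaRel w w

/-- F_γ = ⋃_{n ≥ 1} F_n. -/
def InFgamma (w : Word) : Prop := ∃ n : ℕ, 1 ≤ n ∧ InF n w

/-- x^y: concatenation of the word x with itself y times. -/
def wpow (x : Word) : ℕ → Word
  | 0 => []
  | k + 1 => x ++ wpow x k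

section helpers

@[simp] lemma beq_aa : (Letter.a == Letter.a) = true := rfl
@[simp] lemma beq_ab : (Letter.a == Letter.b) = false := rfl
@[simp] lemma beq_ba : (Letter.b == Letter.a) = false := rfl
@[simp] lemma beq_bb : (Letter.b == Letter.b) = true := rfl

lemma letter_flip_flip (x : Letter) : x.flip.flip = x := by cases x <;> rfl

@[simp] lemma comp_cons (x : Letter) (l : Word) : comp (x :: l) = x.flip :: comp l := rfl
@[simp] lemma flip_a : Letter.a.flip = Letter.b := rfl
@[simp] lemma flip_b : Letter.b.flip = Letter.a := rfl

@[simp] lemma comp_comp (w : Word) : comp (comp w) = w := by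
  simp [comp, List.map_map, Function.comp_def, letter_flip_flip]

@[simp] lemma comp_append (x y : Word) : comp (x ++ y) = comp x ++ comp y := by simp [comp]

@[simp] lemma comp_nil : comp [] = [] := rfl
@[simp] lemma comp_a : comp [Letter.a] = [Letter.b] := rfl
@[simp] lemma comp_b : comp [Letter.b] = [Letter.a] := rfl

lemma comp_reverse (w : Word) : comp w.reverse = (comp w).reverse := by simp [comp]

@[simp] lemma length_comp (w : Word) : (comp w).length = w.length := by simp [comp]

lemma comp_inj {x y : Word} (h : comp x = comp y) : x = y := by
  have := congrArg comp h
  simpa using this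

lemma count_comp_a (w : Word) : (comp w).count Letter.a = w.count Letter.b := by
  induction w with
  | nil => rfl
  | cons x t ih => cases x <;> simp [List.count_cons] at * <;> omega

lemma count_comp_b (w : Word) : (comp w).count Letter.b = w.count Letter.a := by
  induction w with
  | nil => rfl
  | cons x t ih => cases x <;> simp [List.count_cons] at * <;> omega

lemma delta_comp (w : Word) : delta (comp w) = - delta w := by
  simp [delta, count_comp_a, count_comp_b, sub_eq_neg_add]

lemma delta_append (x y : Word) : delta (x ++ y) = delta x + delta y := by
  simp [delta]; ring

lemma delta_nil : delta [] = 0 := rfl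
lemma delta_a : delta [Letter.a] = 1 := rfl
lemma delta_b : delta [Letter.b] = -1 := rfl

lemma length_count (w : Word) : w.count Letter.a + w.count Letter.b = w.length := by
  induction w with
  | nil => rfl
  | cons x t ih => cases x <;> simp [List.count_cons] at * <;> omega

lemma eq_nil_of_self_eq_comp {v : Word} (h : v = comp v) : v = [] := by
  cases v with
  | nil => rfl
  | cons x t =>
    exfalso
    have hx : x = x.flip := by
      have := congrArg (·.head?) h
      simpa [comp] using this
    cases x <;> simp at hx

lemma split_mid {A B C D : Word} {x y : Letter}
    (h : A ++ [x] ++ B = C ++ [y] ++ D) (hl : A.length = C.length) :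
    A = C ∧ x = y ∧ B = D := by
  have h' : A ++ ([x] ++ B) = C ++ ([y] ++ D) := by simpa [List.append_assoc] using h
  obtain ⟨h1, h2⟩ := List.append_inj h' hl
  refine ⟨h1, ?_, ?_⟩
  · injection h2 with h3 _
  · injection h2 with _ h4

lemma prefix_extract {A R C S : Word} (h : A ++ R = C ++ S) (hl : A.length ≤ C.length) :
    ∃ t, C = A ++ t := by
  have h1 : A <+: C ++ S := ⟨R, h⟩
  have h2 : C <+: C ++ S := List.prefix_append C S
  obtain ⟨t, ht⟩ := List.prefix_of_prefix_length_le h1 h2 hl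
  exact ⟨t, ht.symm⟩

lemma prefix_append_left {x l₁ l₂ : Word} (h : l₁ <+: l₂) : x ++ l₁ <+: x ++ l₂ := by
  obtain ⟨t, ht⟩ := h
  exact ⟨t, by rw [List.append_assoc, ht]⟩

lemma prefix_snoc {p x : Word} {c : Letter} (h : p <+: x ++ [c]) :
    p <+: x ∨ p = x ++ [c] := by
  rcases le_or_gt p.length x.length with hl | hl
  · exact Or.inl (List.prefix_of_prefix_length_le h (List.prefix_append x [c]) hl)
  · right
    apply h.eq_of_length
    have := h.length_le
    simp at this ⊢
    omega

lemma pp_unique {u₁ u₂ w : Word} (h₁ : IsPrincipalPrefix u₁ w)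
    (h₂ : IsPrincipalPrefix u₂ w) : u₁ = u₂ := by
  have d1 := h₁.2.1 u₂ h₂.1
  have d2 := h₂.2.1 u₁ h₁.1
  have hd : delta u₁ = delta u₂ := le_antisymm d2 d1
  have l1 := h₁.2.2 u₂ h₂.1 hd.symm
  have l2 := h₂.2.2 u₁ h₁.1 hd
  exact (List.prefix_of_prefix_length_le h₁.1 h₂.1 l1).eq_of_length (le_antisymm l1 l2)

end helpers
lemma key : ∀ N : ℕ, ∀ u v : Word, u.length + v.length ≤ N → u.reverse = u →
    ((u ++ [Letter.a] ++ v = comp v ++ [Letter.a] ++ u) → sym v = v) ∧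
    ((v ++ [Letter.a] ++ u = comp u ++ [Letter.b] ++ comp v) → v.reverse = v) := by
  intro N
  induction N using Nat.strong_induction_on with
  | _ N ih =>
  intro u v hlen hpal
  constructor
  · -- G side
    intro hG
    rcases lt_trichotomy u.length v.length with hmp | hmp | hmp
    · -- |u| < |v|
      obtain ⟨s, hs⟩ : ∃ s, comp v = (u ++ [Letter.a]) ++ s := by
        apply prefix_extract (R := v) (S := [Letter.a] ++ u)
        · simpa [List.append_assoc] using hG
        · simp [length_comp]; omega
      have hv1 : v = s ++ [Letter.a] ++ u := by
        have h2 := hG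
        rw [hs] at h2
        have h3 : (u ++ [Letter.a]) ++ v = (u ++ [Letter.a]) ++ (s ++ [Letter.a] ++ u) := by
          simpa [List.append_assoc] using h2
        exact List.append_cancel_left h3
      have hv2 : v = comp u ++ [Letter.b] ++ comp s := by
        have := congrArg comp hs
        simpa [comp_comp, comp_append, comp_a] using this
      have hH : s ++ [Letter.a] ++ u = comp u ++ [Letter.b] ++ comp s :=
        hv1.symm.trans hv2
      have hslen : v.length = u.length + (s.length + 1) := by
        have := congrArg List.length hs
        simpa [length_comp] using this
      have hs_pal : s.reverse = s :=
        (ih (u.length + s.length) (by omega) u s le_rfl hpal).2 hH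
      have : sym v = comp u ++ [Letter.b] ++ comp s := by
        rw [hv1]
        simp [sym, comp_append, comp_a, comp_cons, hpal, hs_pal, List.append_assoc]
      rw [this, ← hv2]
    · -- |u| = |v|
      obtain ⟨h1, _, h3⟩ := split_mid hG (by simp [length_comp, hmp])
      have : v = comp v := h3.trans h1
      rw [eq_nil_of_self_eq_comp this]
      rfl
    · -- |u| > |v|
      obtain ⟨t, ht⟩ : ∃ t, u = (comp v ++ [Letter.a]) ++ t := by
        apply prefix_extract (R := u) (S := [Letter.a] ++ v)
        · simpa [List.append_assoc] using hG.symm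
        · simp [length_comp]; omega
      have hdag : t ++ [Letter.a] ++ v = comp v ++ [Letter.a] ++ t := by
        have h2 := hG
        rw [ht] at h2
        have h3 : (comp v ++ [Letter.a]) ++ (t ++ [Letter.a] ++ v)
            = (comp v ++ [Letter.a]) ++ (comp v ++ [Letter.a] ++ t) := by
          simpa [List.append_assoc] using h2
        exact List.append_cancel_left h3
      have hp2 : t.reverse ++ [Letter.a] ++ (comp v).reverse = t ++ [Letter.a] ++ v := by
        have h2 := hpal
        rw [ht] at h2
        have h3 : t.reverse ++ [Letter.a] ++ (comp v).reverse
            = comp v ++ [Letter.a] ++ t := by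
          simpa [List.append_assoc] using h2
        rw [h3, ← hdag]
      obtain ⟨_, _, h6⟩ := split_mid hp2 (by simp)
      have h7 : (comp v).reverse = v := h6
      calc sym v = (comp v).reverse := by rw [sym, comp_reverse]
      _ = v := h7
  · -- H side
    intro hH
    rcases lt_trichotomy v.length u.length with hmp | hmp | hmp
    · -- |v| < |u|
      obtain ⟨t, ht⟩ : ∃ t, comp u = (v ++ [Letter.a]) ++ t := by
        apply prefix_extract (R := u) (S := [Letter.b] ++ comp v)
        · simpa [List.append_assoc] using hH
        · simp [length_comp]; omega
      have hu : u = comp v ++ [Letter.b] ++ comp t := by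
        have := congrArg comp ht
        simpa [comp_comp, comp_append, comp_a] using this
      have hH' : comp v ++ [Letter.b] ++ comp t = t ++ [Letter.b] ++ comp v := by
        have h2 := hH
        rw [ht, hu] at h2
        have h3 : (v ++ [Letter.a]) ++ (comp v ++ [Letter.b] ++ comp t)
            = (v ++ [Letter.a]) ++ (t ++ [Letter.b] ++ comp v) := by
          simpa [List.append_assoc] using h2
        exact List.append_cancel_left h3
      have hG' : v ++ [Letter.a] ++ t = comp t ++ [Letter.a] ++ v := by
        have := congrArg comp hH'
        simpa [comp_comp, comp_append, comp_a, comp_b] using this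
      have hP' : t.reverse ++ [Letter.a] ++ v.reverse = v ++ [Letter.a] ++ t := by
        have h2 := hpal
        rw [hu] at h2
        have h3 : (comp t).reverse ++ [Letter.b] ++ (comp v).reverse
            = comp v ++ [Letter.b] ++ comp t := by
          simpa [List.append_assoc] using h2
        have h4 := congrArg comp h3
        have h5 : comp ((comp t).reverse) ++ [Letter.a] ++ comp ((comp v).reverse)
            = v ++ [Letter.a] ++ t := by
          simpa [comp_append, comp_b, comp_comp, List.append_assoc] using h4
        calc t.reverse ++ [Letter.a] ++ v.reverse
            = comp ((comp t).reverse) ++ [Letter.a] ++ comp ((comp v).reverse) := by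
              rw [← comp_reverse, ← comp_reverse, comp_comp, comp_comp]
        _ = v ++ [Letter.a] ++ t := h5
      rcases lt_trichotomy v.length t.length with hvt | hvt | hvt
      · -- |v| < |t|
        obtain ⟨r, hr⟩ : ∃ r, comp t = (v ++ [Letter.a]) ++ r := by
          apply prefix_extract (R := t) (S := [Letter.a] ++ v)
          · simpa [List.append_assoc] using hG'
          · simp [length_comp]; omega
        have htr : t = r ++ [Letter.a] ++ v := by
          have h2 := hG'
          rw [hr] at h2
          have h3 : (v ++ [Letter.a]) ++ t = (v ++ [Letter.a]) ++ (r ++ [Letter.a] ++ v) := by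
            simpa [List.append_assoc] using h2
          exact List.append_cancel_left h3
        have h4 : v.reverse ++ [Letter.a] ++ (r.reverse ++ [Letter.a] ++ v.reverse)
            = v ++ [Letter.a] ++ (r ++ [Letter.a] ++ v) := by
          have h2 := hP'
          rw [htr] at h2
          simpa [List.append_assoc] using h2
        exact (split_mid h4 (by simp)).1
      · -- |v| = |t|
        obtain ⟨h1, _, h3⟩ := split_mid hG' (by simp [length_comp, hvt])
        rw [h3] at h1
        simp [eq_nil_of_self_eq_comp h1]
      · -- |v| > |t|
        obtain ⟨r, hr⟩ : ∃ r, v = (comp t ++ [Letter.a]) ++ r := by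
          apply prefix_extract (R := v) (S := [Letter.a] ++ t)
          · simpa [List.append_assoc] using hG'.symm
          · simp [length_comp]; omega
        have hGpp : r ++ [Letter.a] ++ t = comp t ++ [Letter.a] ++ r := by
          have h2 := hG'
          rw [hr] at h2
          have h3 : (comp t ++ [Letter.a]) ++ (r ++ [Letter.a] ++ t)
              = (comp t ++ [Letter.a]) ++ (comp t ++ [Letter.a] ++ r) := by
            simpa [List.append_assoc] using h2
          exact List.append_cancel_left h3
        have h4 : t.reverse ++ [Letter.a] ++ (r.reverse ++ [Letter.a] ++ (comp t).reverse)
            = comp t ++ [Letter.a] ++ (r ++ [Letter.a] ++ t) := by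
          have h2 := hP'
          rw [hr] at h2
          simpa [List.append_assoc] using h2
        obtain ⟨h5, _, h6⟩ := split_mid h4 (by simp [length_comp])
        obtain ⟨h7, _, h8⟩ := split_mid h6 (by simp)
        rw [hr]
        have : ((comp t ++ [Letter.a]) ++ r).reverse
            = r.reverse ++ [Letter.a] ++ (comp t).reverse := by
          simp [List.append_assoc]
        rw [this, h7, h8]
        exact hGpp
    · -- |v| = |u|
      obtain ⟨h1, h2, _⟩ := split_mid hH (by simp [length_comp, hmp])
      cases h2
    · -- |v| > |u|
      obtain ⟨t, ht⟩ : ∃ t, v = (comp u ++ [Letter.b]) ++ t := by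
        apply prefix_extract (R := comp v) (S := [Letter.a] ++ u)
        · simpa [List.append_assoc] using hH.symm
        · simp [length_comp]; omega
      have hcv : comp v = u ++ [Letter.a] ++ comp t := by
        have := congrArg comp ht
        simpa [comp_comp, comp_append, comp_b] using this
      have hsharp : t ++ [Letter.a] ++ u = u ++ [Letter.a] ++ comp t := by
        have h2 := hH
        rw [hcv] at h2
        rw [ht] at h2
        have h3 : (comp u ++ [Letter.b]) ++ (t ++ [Letter.a] ++ u)
            = (comp u ++ [Letter.b]) ++ (u ++ [Letter.a] ++ comp t) := by
          simpa [List.append_assoc] using h2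
        exact List.append_cancel_left h3
      have hG' : u ++ [Letter.a] ++ comp t = comp (comp t) ++ [Letter.a] ++ u := by
        rw [comp_comp]; exact hsharp.symm
      have hlen2 : v.length = u.length + (t.length + 1) := by
        have := congrArg List.length ht
        simpa [length_comp] using this
      have hsymt : sym (comp t) = comp t :=
        (ih (u.length + (comp t).length) (by simp [length_comp]; omega) u (comp t)
          le_rfl hpal).1 hG'
      have hrt : t.reverse = comp t := by
        have h2 : comp ((comp t).reverse) = comp t := hsymt
        have h3 : (comp t).reverse = t := comp_inj h2
        have h4 : comp (t.reverse) = t := by rw [comp_reverse]; exact h3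
        have := congrArg comp h4
        simpa [comp_comp] using this
      rw [ht]
      have h5 : ((comp u ++ [Letter.b]) ++ t).reverse
          = t.reverse ++ [Letter.b] ++ (comp u).reverse := by simp [List.append_assoc]
      rw [h5, hrt]
      have h6 : (comp u).reverse = comp u := by
        rw [← comp_reverse, hpal]
      rw [h6]
      have h7 := congrArg comp hsharp
      have h8 : comp t ++ [Letter.b] ++ comp u = comp u ++ [Letter.b] ++ t := by
        simpa [comp_append, comp_a, comp_comp, List.append_assoc] using h7
      simpa [List.append_assoc] using h8

lemma lemma2 : ∀ N : ℕ, ∀ u v : Word, u.length ≤ N → u.reverse = u →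
    u ++ [Letter.a] ++ v = comp v ++ [Letter.a] ++ u →
    IsPrincipalPrefix (u ++ [Letter.a]) (u ++ [Letter.a] ++ v) →
    v ≠ [] →
    GammaRel (comp v ++ [Letter.b]) (comp v ++ [Letter.b]) := by
  intro N
  induction N using Nat.strong_induction_on with
  | _ N ih =>
  intro u v hN hpal hG hppY hv
  have hdv : delta v = 0 := by
    have := congrArg delta hG
    simp only [delta_append, delta_comp, delta_a] at this
    omega
  have hYw : ∀ p : Word, p <+: comp v → p <+: u ++ [Letter.a] ++ v := by
    intro p hp
    have h2 : comp v <+: u ++ [Letter.a] ++ v :=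
      ⟨[Letter.a] ++ u, by rw [hG]; simp [List.append_assoc]⟩
    exact hp.trans h2
  have hpos : 0 < delta (u ++ [Letter.a]) := by
    have h0 := hppY.2.1 [] (List.nil_prefix)
    rcases lt_or_eq_of_le h0 with h | h
    · simpa [delta_nil] using h
    · exfalso
      have := hppY.2.2 [] (List.nil_prefix) h
      simp at this
  rcases lt_trichotomy u.length v.length with hmp | hmp | hmp
  · -- |u| < |v|
    obtain ⟨s, hs⟩ : ∃ s, comp v = (u ++ [Letter.a]) ++ s := by
      apply prefix_extract (R := v) (S := [Letter.a] ++ u)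
      · simpa [List.append_assoc] using hG
      · simp; omega
    have hv1 : v = s ++ [Letter.a] ++ u := by
      have h2 := hG
      rw [hs] at h2
      have h3 : (u ++ [Letter.a]) ++ v = (u ++ [Letter.a]) ++ (s ++ [Letter.a] ++ u) := by
        simpa [List.append_assoc] using h2
      exact List.append_cancel_left h3
    refine ⟨u ++ [Letter.a], s, ⟨?_, ?_, ?_⟩, ?_, ?_⟩
    · exact ⟨s ++ [Letter.b], by rw [hs]; simp [List.append_assoc]⟩
    · intro p hp
      rcases prefix_snoc hp with hp' | rfl
      · exact hppY.2.1 p (hYw p hp')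
      · have : delta (comp v ++ [Letter.b]) = -1 := by
          simp [delta_append, delta_comp, delta_b, hdv]
        rw [this]; omega
    · intro p hp hdp
      rcases prefix_snoc hp with hp' | rfl
      · exact hppY.2.2 p (hYw p hp') hdp
      · exfalso
        have h9 : delta (comp v ++ [Letter.b]) = -1 := by
          rw [delta_append, delta_comp, hdv, delta_b]; norm_num
        omega
    · rw [hs]
    · rw [hv1]
      simp [List.append_assoc]
  · -- |u| = |v| : impossible
    exfalso
    obtain ⟨h1, _, h3⟩ := split_mid hG (by simp [hmp])
    exact hv (eq_nil_of_self_eq_comp (h3.trans h1))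
  · -- |u| > |v|
    obtain ⟨t, ht⟩ : ∃ t, u = (comp v ++ [Letter.a]) ++ t := by
      apply prefix_extract (R := u) (S := [Letter.a] ++ v)
      · simpa [List.append_assoc] using hG.symm
      · simp; omega
    have hdag : t ++ [Letter.a] ++ v = comp v ++ [Letter.a] ++ t := by
      have h2 := hG
      rw [ht] at h2
      have h3 : (comp v ++ [Letter.a]) ++ (t ++ [Letter.a] ++ v)
          = (comp v ++ [Letter.a]) ++ (comp v ++ [Letter.a] ++ t) := by
        simpa [List.append_assoc] using h2
      exact List.append_cancel_left h3
    have hp2 : t.reverse ++ [Letter.a] ++ (comp v).reverse = t ++ [Letter.a] ++ v := by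
      have h2 := hpal
      rw [ht] at h2
      have h3 : t.reverse ++ [Letter.a] ++ (comp v).reverse
          = comp v ++ [Letter.a] ++ t := by
        simpa [List.append_assoc] using h2
      rw [h3, ← hdag]
    have ht_pal : t.reverse = t := (split_mid hp2 (by simp)).1
    have hlt : u.length = v.length + 1 + t.length := by
      have := congrArg List.length ht
      simp at this
      omega
    have hdu : delta u = delta t + 1 := by
      have := congrArg delta ht
      simp only [delta_append, delta_comp, delta_a, hdv] at this
      omega
    have hppY' : IsPrincipalPrefix (t ++ [Letter.a]) (t ++ [Letter.a] ++ v) := by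
      refine ⟨⟨v, rfl⟩, ?_, ?_⟩
      · intro p hp
        have hq : (comp v ++ [Letter.a]) ++ p <+: u ++ [Letter.a] ++ v := by
          have : u ++ [Letter.a] ++ v = (comp v ++ [Letter.a]) ++ (t ++ [Letter.a] ++ v) := by
            rw [ht]; simp [List.append_assoc]
          rw [this]
          exact prefix_append_left hp
        have := hppY.2.1 _ hq
        simp only [delta_append, delta_comp, delta_a, hdv, hdu] at this ⊢
        omega
      · intro p hp hdp
        have hq : (comp v ++ [Letter.a]) ++ p <+: u ++ [Letter.a] ++ v := by
          have : u ++ [Letter.a] ++ v = (comp v ++ [Letter.a]) ++ (t ++ [Letter.a] ++ v) := by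
            rw [ht]; simp [List.append_assoc]
          rw [this]
          exact prefix_append_left hp
        have hdq : delta ((comp v ++ [Letter.a]) ++ p) = delta (u ++ [Letter.a]) := by
          simp only [delta_append, delta_comp, delta_a, hdv, hdu] at hdp ⊢
          omega
        have := hppY.2.2 _ hq hdq
        simp at this ⊢
        omega
    exact ih t.length (by omega) t v le_rfl ht_pal hdag hppY' hv

/-- Recursive structure: for w = u·a·v·b·Sym(u)·b ∈ F_n with u·a its
    principal prefix and v ≠ λ, v is symmetric and v̄·b ∈ F_γ. -/
theorem recursive_structure (n : ℕ) (w u v : Word) (hw : InF n w)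
    (hdec : w = u ++ [Letter.a] ++ v ++ [Letter.b] ++ sym u ++ [Letter.b])
    (hpp : IsPrincipalPrefix (u ++ [Letter.a]) w)
    (hv : v ≠ []) :
    sym v = v ∧ InFgamma (comp v ++ [Letter.b]) := by
  obtain ⟨hD, u', v', hppu', hsplit, hfix⟩ := hw
  have hu' : u' = u ++ [Letter.a] := pp_unique hppu' hpp
  subst hu'
  have hv' : v' = v ++ [Letter.b] ++ sym u := by
    have h1 : (u ++ [Letter.a]) ++ (v' ++ [Letter.b])
        = (u ++ [Letter.a]) ++ ((v ++ [Letter.b] ++ sym u) ++ [Letter.b]) := by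
      have := hsplit.symm.trans hdec
      simpa [List.append_assoc] using this
    have h2 := List.append_cancel_left h1
    exact (List.append_inj' h2 rfl).1
  subst hv'
  have hE : (u ++ [Letter.a] ++ v ++ [Letter.b]) ++ (comp u.reverse ++ [Letter.b])
      = (comp v ++ [Letter.a] ++ u.reverse ++ [Letter.b]) ++ (comp u ++ [Letter.b]) := by
    have := hdec.symm.trans hfix
    simpa [sym, List.append_assoc] using this
  obtain ⟨h1, h2⟩ := List.append_inj' hE (by simp)
  have hsymu : comp u.reverse = comp u := (List.append_inj' h2 rfl).1
  have hpal : u.reverse = u := comp_inj hsymu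
  rw [hpal] at h1
  have hstar : u ++ [Letter.a] ++ v = comp v ++ [Letter.a] ++ u :=
    (List.append_inj' h1 rfl).1
  have hsym : sym v = v := (key (u.length + v.length) u v le_rfl hpal).1 hstar
  refine ⟨hsym, ?_⟩
  have hYpref : u ++ [Letter.a] ++ v <+: w := by
    rw [hdec]
    exact ⟨[Letter.b] ++ sym u ++ [Letter.b], by simp [List.append_assoc]⟩
  have hppY : IsPrincipalPrefix (u ++ [Letter.a]) (u ++ [Letter.a] ++ v) := by
    refine ⟨⟨v, rfl⟩, ?_, ?_⟩
    · intro p hp; exact hpp.2.1 p (hp.trans hYpref)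
    · intro p hp hdp; exact hpp.2.2 p (hp.trans hYpref) hdp
  have hdv : delta v = 0 := by
    have := congrArg delta hstar
    simp only [delta_append, delta_comp, delta_a] at this
    omega
  have hcount : v.count Letter.a = v.count Letter.b := by
    have h3 := hdv
    simp only [delta] at h3
    omega
  have hlc := length_count v
  refine ⟨v.count Letter.a, ?_, ⟨⟨comp v, ⟨?_, ?_⟩, ?_, rfl⟩, ?_⟩⟩
  · rcases Nat.eq_zero_or_pos (v.count Letter.a) with h | h
    · exfalso
      apply hv
      have hvl : v.length = 0 := by omega
      exact List.length_eq_zero_iff.mp hvl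
    · exact h
  · rw [delta_comp, hdv]; norm_num
  · intro p hp
    have hp' : comp p <+: v := by
      have h4 := hp.map Letter.flip
      have h5 : comp p <+: comp (comp v) := h4
      simpa using h5
    have hq : (u ++ [Letter.a]) ++ comp p <+: w :=
      (prefix_append_left hp').trans hYpref
    have h6 := hpp.2.1 _ hq
    rw [delta_append, delta_comp] at h6
    omega
  · simp only [length_comp]
    omega
  · exact lemma2 u.length u v le_rfl hpal hstar hppY hv
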